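/- arXiv:2212.11702 — 2 statements merged into one kernel-verified Lean document; each statement's English description precedes it below -/
import Mathlib

section
/- In the setting of Theorem 1 (tasks ρ with nonempty admissible label sets Y(ρ) ⊆ Fin C, class-conditional distributions π(·|y) on X, task query measures π_ρ with uniform labels over Y(ρ), mixture π_μ = μ.bind (ρ ↦ π_ρ)), define for each measurable feature map g : X → EuclideanSpace ℝ (Fin m) and classifier W : Fin C → EuclideanSpace ℝ (Fin m) the GLS risk E_GLS(W, g) = ∫⁻_ρ ∫⁻_{(x,y)} ENNReal.ofReal( ℓ_{Y(ρ)}(W g(x), y) ) dπ_ρ dμ and the pre-training risk L(W, g) = ∫⁻_{(x,y)} ENNReal.ofReal( ℓ(W g(x), y) ) dπ_μ. If the global classes are separable in the sense that the infimum over all pairs (W, g) of L(W, g) equals 0, then the infimum over all pairs (W, g) of E_GLS(W, g) also equals 0; in particular the two infima are equal. -/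
open MeasureTheory RealInnerProductSpace ENNReal

/-- Multi-class cross-entropy loss over all `C` classes. -/
noncomputable def crossEntropy (C : ℕ) (a : Fin C → ℝ) (y : Fin C) : ℝ :=
  -Real.log (Real.exp (a y) / ∑ z : Fin C, Real.exp (a z))

/-- Cross-entropy loss restricted to the subset `T` of classes. -/
noncomputable def crossEntropyOn (C : ℕ) (T : Finset (Fin C)) (a : Fin C → ℝ) (y : Fin C) : ℝ :=
  -Real.log (Real.exp (a y) / ∑ z ∈ T, Real.exp (a z))

lemma crossEntropy_nonneg (C : ℕ) (a : Fin C → ℝ) (y : Fin C) :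
    0 ≤ crossEntropy C a y := by
  unfold crossEntropy
  have hS : Real.exp (a y) ≤ ∑ z : Fin C, Real.exp (a z) :=
    Finset.single_le_sum (fun z _ => (Real.exp_pos (a z)).le) (Finset.mem_univ y)
  have hpos : 0 < ∑ z : Fin C, Real.exp (a z) := lt_of_lt_of_le (Real.exp_pos _) hS
  have h1 : Real.exp (a y) / ∑ z : Fin C, Real.exp (a z) ≤ 1 :=
    (div_le_one hpos).mpr hS
  have := Real.log_nonpos (by positivity) h1
  linarith

lemma crossEntropyOn_le (C : ℕ) (T : Finset (Fin C)) (a : Fin C → ℝ) (y : Fin C) :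
    crossEntropyOn C T a y ≤ crossEntropy C a y := by
  rcases T.eq_empty_or_nonempty with rfl | ⟨t, ht⟩
  · simp [crossEntropyOn, Real.log_zero]
    exact crossEntropy_nonneg C a y
  · unfold crossEntropyOn crossEntropy
    have hTpos : 0 < ∑ z ∈ T, Real.exp (a z) :=
      Finset.sum_pos (fun z _ => Real.exp_pos _) ⟨t, ht⟩
    have hle : (∑ z ∈ T, Real.exp (a z)) ≤ ∑ z : Fin C, Real.exp (a z) :=
      Finset.sum_le_sum_of_subset_of_nonneg (Finset.subset_univ T)
        (fun z _ _ => (Real.exp_pos _).le)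
    have hdiv : Real.exp (a y) / ∑ z : Fin C, Real.exp (a z)
        ≤ Real.exp (a y) / ∑ z ∈ T, Real.exp (a z) :=
      div_le_div_of_nonneg_left (Real.exp_pos _).le hTpos hle
    have hpos : 0 < ∑ z : Fin C, Real.exp (a z) :=
      lt_of_lt_of_le (Real.exp_pos (a y))
        (Finset.single_le_sum (fun z _ => (Real.exp_pos (a z)).le) (Finset.mem_univ y))
    have := Real.log_le_log (div_pos (Real.exp_pos _) hpos) hdiv
    linarith

/-- **Theorem 1, Eq. (15).** If the global classes are separable, i.e. the
infimum of the pre-training risk over all pairs `(W, g)` (with `g` measurable) is `0`, then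
the infimum of the GLS meta-risk also equals `0`; in particular the two infima coincide. -/
theorem gls_inf_eq_pretraining_inf_of_separable
    {R X : Type*} [MeasurableSpace R] [MeasurableSpace X]
    (C m : ℕ) (hC : 0 < C) (hm : 0 < m)
    (μ : Measure R) [IsProbabilityMeasure μ]
    (Y : R → Finset (Fin C)) (hY : ∀ ρ, (Y ρ).Nonempty)
    (π : Fin C → Measure X) (hπ : ∀ y, IsProbabilityMeasure (π y))
    (πρ : R → Measure (X × Fin C))
    (hπρ : ∀ ρ, πρ ρ =
      ∑ y ∈ Y ρ, ((Y ρ).card : ℝ≥0∞)⁻¹ • ((π y).map (fun x => (x, y))))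
    (hmeas : Measurable πρ)
    (hsep : (⨅ (W : Fin C → EuclideanSpace ℝ (Fin m)) (g : X → EuclideanSpace ℝ (Fin m))
        (_ : Measurable g),
        ∫⁻ p, ENNReal.ofReal
          (crossEntropy C (fun z => ⟪W z, g p.1⟫) p.2) ∂(μ.bind πρ)) = 0) :
    (⨅ (W : Fin C → EuclideanSpace ℝ (Fin m)) (g : X → EuclideanSpace ℝ (Fin m))
        (_ : Measurable g),
        ∫⁻ ρ, (∫⁻ p, ENNReal.ofReal
          (crossEntropyOn C (Y ρ) (fun z => ⟪W z, g p.1⟫) p.2) ∂(πρ ρ)) ∂μ) = 0 ∧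
    (⨅ (W : Fin C → EuclideanSpace ℝ (Fin m)) (g : X → EuclideanSpace ℝ (Fin m))
        (_ : Measurable g),
        ∫⁻ ρ, (∫⁻ p, ENNReal.ofReal
          (crossEntropyOn C (Y ρ) (fun z => ⟪W z, g p.1⟫) p.2) ∂(πρ ρ)) ∂μ) =
      (⨅ (W : Fin C → EuclideanSpace ℝ (Fin m)) (g : X → EuclideanSpace ℝ (Fin m))
        (_ : Measurable g),
        ∫⁻ p, ENNReal.ofReal
          (crossEntropy C (fun z => ⟪W z, g p.1⟫) p.2) ∂(μ.bind πρ)) := by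
  have key : (⨅ (W : Fin C → EuclideanSpace ℝ (Fin m)) (g : X → EuclideanSpace ℝ (Fin m))
        (_ : Measurable g),
        ∫⁻ ρ, (∫⁻ p, ENNReal.ofReal
          (crossEntropyOn C (Y ρ) (fun z => ⟪W z, g p.1⟫) p.2) ∂(πρ ρ)) ∂μ) = 0 := by
    rw [← le_zero_iff, ← hsep]
    refine le_iInf fun W => le_iInf fun g => le_iInf fun hg => ?_
    refine le_trans (iInf₂_le_of_le W g (iInf_le_of_le hg ?_)) le_rfl
    -- GLS(W,g) ≤ L(W,g)
    have hf : Measurable fun p : X × Fin C =>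
        ENNReal.ofReal (crossEntropy C (fun z => ⟪W z, g p.1⟫) p.2) := by
      have h1 : Measurable fun p : X × Fin C => (⟪W p.2, g p.1⟫ : ℝ) := by
        apply Measurable.inner
        · exact (measurable_of_countable W).comp measurable_snd
        · exact hg.comp measurable_fst
      have h2 : Measurable fun p : X × Fin C =>
          (∑ z : Fin C, Real.exp ⟪W z, g p.1⟫ : ℝ) := by
        apply Finset.measurable_sum
        intro z _
        exact Real.measurable_exp.comp
          (((continuous_const.inner continuous_id).measurable).comp (hg.comp measurable_fst))
      unfold crossEntropy
      exact (((Real.measurable_exp.comp h1).div h2).log).neg.ennreal_ofReal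
    rw [Measure.lintegral_bind hmeas.aemeasurable hf.aemeasurable]
    refine lintegral_mono fun ρ => lintegral_mono fun p => ?_
    exact ENNReal.ofReal_le_ofReal (crossEntropyOn_le C (Y ρ) _ p.2)
  exact ⟨key, by rw [key, hsep]⟩
end

section
/- Fix positive integers C and m, a feature vector v ∈ EuclideanSpace ℝ (Fin m), and a label y : Fin C. For every W : Fin C → EuclideanSpace ℝ (Fin m), writing p = softmax(Wv), the inequality (1 - p_y)² + ∑_{z ≠ y} p_z² ≤ 2 holds, and consequently the gradient G(W) of the map W ↦ ℓ(Wv, y) with respect to the Frobenius structure satisfies ‖G(W)‖_F ≤ sqrt(2) · ‖v‖; in particular W ↦ ℓ(Wv, y) is Lipschitz with constant sqrt(2) · ‖v‖ with respect to the Frobenius norm. -/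
open RealInnerProductSpace

/-- The softmax of a score vector. -/
noncomputable def softmax (C : ℕ) (a : Fin C → ℝ) (z : Fin C) : ℝ :=
  Real.exp (a z) / ∑ w : Fin C, Real.exp (a w)

/-- The gradient of `W ↦ ℓ(Wv, y)` with respect to the classifier `W`:
its `z`-th row is `(softmax(Wv)_z - δ_{z y}) • v`. -/
noncomputable def classifierGrad (C m : ℕ) (v : EuclideanSpace ℝ (Fin m)) (y : Fin C)
    (W : PiLp 2 fun _ : Fin C => EuclideanSpace ℝ (Fin m)) :
    PiLp 2 fun _ : Fin C => EuclideanSpace ℝ (Fin m) :=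
  WithLp.toLp 2 fun z => (softmax C (fun w => ⟪W w, v⟫) z - if z = y then 1 else 0) • v

/-! ### Auxiliary lemmas -/

lemma sum_exp_pos' {C : ℕ} (hC : 0 < C) (a : Fin C → ℝ) :
    0 < ∑ w : Fin C, Real.exp (a w) := by
  haveI : Nonempty (Fin C) := Fin.pos_iff_nonempty.mp hC
  exact Finset.sum_pos (fun w _ => Real.exp_pos _) Finset.univ_nonempty

lemma softmax_nonneg' {C : ℕ} (a : Fin C → ℝ) (z : Fin C) : 0 ≤ softmax C a z := by
  unfold softmax
  positivity

lemma softmax_le_one' {C : ℕ} (hC : 0 < C) (a : Fin C → ℝ) (z : Fin C) :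
    softmax C a z ≤ 1 := by
  unfold softmax
  rw [div_le_one (sum_exp_pos' hC a)]
  exact Finset.single_le_sum (fun w _ => (Real.exp_pos _).le) (Finset.mem_univ z)

lemma softmax_sum' {C : ℕ} (hC : 0 < C) (a : Fin C → ℝ) :
    ∑ z : Fin C, softmax C a z = 1 := by
  unfold softmax
  rw [← Finset.sum_div, div_self (sum_exp_pos' hC a).ne']

lemma softmax_sq_bound' {C : ℕ} (hC : 0 < C) (a : Fin C → ℝ) (y : Fin C) :
    (1 - softmax C a y) ^ 2 + ∑ z ∈ Finset.univ.erase y, softmax C a z ^ 2 ≤ 2 := by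
  have h0 := softmax_nonneg' a y
  have h1 := softmax_le_one' hC a y
  have hsum : ∑ z ∈ Finset.univ.erase y, softmax C a z ^ 2 ≤ 1 - softmax C a y := by
    calc ∑ z ∈ Finset.univ.erase y, softmax C a z ^ 2
        ≤ ∑ z ∈ Finset.univ.erase y, softmax C a z :=
          Finset.sum_le_sum (fun z _ => by
            nlinarith [softmax_nonneg' a z, softmax_le_one' hC a z])
      _ = 1 - softmax C a y := by
          rw [Finset.sum_erase_eq_sub (Finset.mem_univ y), softmax_sum' hC a]
  nlinarith

lemma u_sq_sum_le' {C : ℕ} (hC : 0 < C) (a : Fin C → ℝ) (y : Fin C) :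
    ∑ z : Fin C, (softmax C a z - if z = y then 1 else 0) ^ 2 ≤ 2 := by
  rw [← Finset.add_sum_erase _ _ (Finset.mem_univ y)]
  have h1 : (softmax C a y - if y = y then 1 else 0) ^ 2 = (1 - softmax C a y) ^ 2 := by
    simp; ring
  have h2 : ∀ z ∈ Finset.univ.erase y,
      (softmax C a z - if z = y then 1 else 0) ^ 2 = softmax C a z ^ 2 := by
    intro z hz
    rw [if_neg (Finset.ne_of_mem_erase hz), sub_zero]
  rw [h1, Finset.sum_congr rfl h2]
  exact softmax_sq_bound' hC a y

/-- Cast a plain function to `EuclideanSpace`, keeping the `PiLp` instance path. -/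
noncomputable def toL2 {n : ℕ} (f : Fin n → ℝ) : EuclideanSpace ℝ (Fin n) :=
  (WithLp.equiv 2 _).symm f

@[simp] lemma toL2_apply {n : ℕ} (f : Fin n → ℝ) (i : Fin n) : toL2 f i = f i := rfl

lemma u_norm_le' {C : ℕ} (hC : 0 < C) (a : Fin C → ℝ) (y : Fin C) :
    ‖toL2 (fun z => softmax C a z - if z = y then 1 else 0)‖ ≤ Real.sqrt 2 := by
  rw [EuclideanSpace.norm_eq]
  apply Real.sqrt_le_sqrt
  simpa [sq_abs] using u_sq_sum_le' hC a y

lemma crossEntropy_eq' {C : ℕ} (hC : 0 < C) (a : Fin C → ℝ) (y : Fin C) :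
    crossEntropy C a y = Real.log (∑ z : Fin C, Real.exp (a z)) - a y := by
  unfold crossEntropy
  rw [Real.log_div (Real.exp_ne_zero _) (sum_exp_pos' hC a).ne', Real.log_exp]
  ring

/-- Log-sum-exp loss on `EuclideanSpace`. -/
noncomputable def lseLoss (C : ℕ) (y : Fin C) (a : EuclideanSpace ℝ (Fin C)) : ℝ :=
  Real.log (∑ z : Fin C, Real.exp (a z)) - a y

lemma hasFDerivAt_lseLoss' {C : ℕ} (hC : 0 < C) (y : Fin C) (a : EuclideanSpace ℝ (Fin C)) :
    HasFDerivAt (lseLoss C y)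
      (innerSL ℝ (toL2 (fun z => softmax C a z - if z = y then 1 else 0))) a := by
  have hS := sum_exp_pos' hC a
  have hproj : ∀ z : Fin C, HasFDerivAt (fun b : EuclideanSpace ℝ (Fin C) => b z)
      (innerSL ℝ (EuclideanSpace.single z (1:ℝ))) a := by
    intro z
    have h : (fun b : EuclideanSpace ℝ (Fin C) => b z)
        = fun b => (innerSL ℝ (EuclideanSpace.single z (1:ℝ))) b := by
      funext b
      simp [EuclideanSpace.inner_single_left]
    rw [h]
    exact (innerSL ℝ (EuclideanSpace.single z (1:ℝ))).hasFDerivAt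
  have hsum : HasFDerivAt (fun b : EuclideanSpace ℝ (Fin C) => ∑ z : Fin C, Real.exp (b z))
      (∑ z : Fin C, Real.exp (a z) • innerSL ℝ (EuclideanSpace.single z (1:ℝ))) a :=
    HasFDerivAt.fun_sum (fun z _ => (hproj z).exp)
  have hlog := hsum.log hS.ne'
  have hfull := hlog.sub (hproj y)
  refine hfull.congr_fderiv ?_
  symm
  apply ContinuousLinearMap.ext
  intro w
  simp only [innerSL_apply_apply, ContinuousLinearMap.sub_apply, ContinuousLinearMap.smul_apply,
    ContinuousLinearMap.sum_apply, PiLp.inner_apply, RCLike.inner_apply, conj_trivial,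
    smul_eq_mul, EuclideanSpace.single_apply, ite_mul, one_mul, zero_mul,
    Finset.sum_ite_eq, Finset.sum_ite_eq', Finset.mem_univ, if_true, toL2_apply]
  simp only [mul_sub, mul_ite, mul_one, mul_zero, Finset.sum_sub_distrib, Finset.sum_ite_eq,
    Finset.sum_ite_eq', Finset.mem_univ, if_true]
  congr 1
  rw [Finset.mul_sum]
  exact Finset.sum_congr rfl fun z _ => by unfold softmax; ring

lemma lipschitz_lseLoss' {C : ℕ} (hC : 0 < C) (y : Fin C) :
    LipschitzWith (NNReal.sqrt 2) (lseLoss C y) := by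
  apply lipschitzWith_of_nnnorm_fderiv_le (𝕜 := ℝ)
    (fun a => (hasFDerivAt_lseLoss' hC y a).differentiableAt)
  intro a
  rw [(hasFDerivAt_lseLoss' hC y a).fderiv]
  rw [← NNReal.coe_le_coe, coe_nnnorm, Real.coe_sqrt]
  rw [innerSL_apply_norm]
  simpa using u_norm_le' hC (fun z => a z) y

lemma lipschitz_scores' {C m : ℕ} (v : EuclideanSpace ℝ (Fin m)) :
    LipschitzWith ‖v‖₊ (fun (W : PiLp 2 fun _ : Fin C => EuclideanSpace ℝ (Fin m)) =>
      toL2 (fun z => ⟪W z, v⟫)) := by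
  apply LipschitzWith.of_dist_le_mul
  intro W W'
  rw [dist_eq_norm, dist_eq_norm]
  have hL : ‖toL2 (fun z => ⟪W z, v⟫) - toL2 (fun z => ⟪W' z, v⟫)‖ ^ 2
      ≤ (‖v‖ * ‖W - W'‖) ^ 2 := by
    rw [PiLp.norm_sq_eq_of_L2]
    have hR : (‖v‖ * ‖W - W'‖) ^ 2 = ∑ z : Fin C, ‖v‖ ^ 2 * ‖W z - W' z‖ ^ 2 := by
      rw [mul_pow, PiLp.norm_sq_eq_of_L2 (fun _ : Fin C => EuclideanSpace ℝ (Fin m)) (W - W'),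
        Finset.mul_sum]
      exact Finset.sum_congr rfl fun z _ => rfl
    rw [hR]
    apply Finset.sum_le_sum
    intro z _
    have hz : (toL2 (fun z => ⟪W z, v⟫) - toL2 (fun z => ⟪W' z, v⟫)) z
        = ⟪W z - W' z, v⟫ := by
      show (⟪W z, v⟫ - ⟪W' z, v⟫ : ℝ) = _
      rw [← inner_sub_left]
    rw [hz]
    have h := abs_real_inner_le_norm (W z - W' z) v
    have habs : ‖(⟪W z - W' z, v⟫ : ℝ)‖ = |(⟪W z - W' z, v⟫ : ℝ)| := rfl
    rw [habs]
    nlinarith [abs_nonneg (⟪W z - W' z, v⟫ : ℝ), norm_nonneg (W z - W' z), norm_nonneg v]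
  have h2 := Real.sqrt_le_sqrt hL
  rwa [Real.sqrt_sq (norm_nonneg _), Real.sqrt_sq (by positivity)] at h2

/-- With `p = softmax (Wv)` one has `(1 - p_y)² + ∑_{z ≠ y} p_z² ≤ 2`,
hence `‖G(W)‖_F ≤ √2 ‖v‖`; in particular `W ↦ ℓ(Wv, y)` is `√2 ‖v‖`-Lipschitz with respect
to the Frobenius norm. -/
theorem crossEntropy_classifier_grad_bound_and_lipschitz
    (C m : ℕ) (hC : 0 < C) (hm : 0 < m)
    (v : EuclideanSpace ℝ (Fin m)) (y : Fin C) :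
    (∀ W : PiLp 2 fun _ : Fin C => EuclideanSpace ℝ (Fin m),
      (1 - softmax C (fun w => ⟪W w, v⟫) y) ^ 2 +
        ∑ z ∈ Finset.univ.erase y, softmax C (fun w => ⟪W w, v⟫) z ^ 2 ≤ 2) ∧
    (∀ W : PiLp 2 fun _ : Fin C => EuclideanSpace ℝ (Fin m),
      ‖classifierGrad C m v y W‖ ≤ Real.sqrt 2 * ‖v‖) ∧
    LipschitzWith (NNReal.sqrt 2 * ‖v‖₊)
      (fun W : PiLp 2 fun _ : Fin C => EuclideanSpace ℝ (Fin m) =>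
        crossEntropy C (fun z => ⟪W z, v⟫) y) := by
  refine ⟨fun W => softmax_sq_bound' hC _ y, fun W => ?_, ?_⟩
  · -- gradient norm bound
    set c : Fin C → ℝ := fun z => softmax C (fun w => ⟪W w, v⟫) z - if z = y then 1 else 0
      with hc
    have hnorm : ‖classifierGrad C m v y W‖
        = Real.sqrt (∑ z : Fin C, c z ^ 2 * ‖v‖ ^ 2) := by
      rw [PiLp.norm_eq_of_L2]
      congr 1
      refine Finset.sum_congr rfl fun z _ => ?_
      have : classifierGrad C m v y W z = c z • v := rfl
      rw [this, norm_smul, mul_pow, Real.norm_eq_abs, sq_abs]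
    rw [hnorm]
    have hle : ∑ z : Fin C, c z ^ 2 * ‖v‖ ^ 2 ≤ 2 * ‖v‖ ^ 2 := by
      rw [← Finset.sum_mul]
      exact mul_le_mul_of_nonneg_right (u_sq_sum_le' hC _ y) (sq_nonneg _)
    calc Real.sqrt (∑ z : Fin C, c z ^ 2 * ‖v‖ ^ 2)
        ≤ Real.sqrt (2 * ‖v‖ ^ 2) := Real.sqrt_le_sqrt hle
      _ = Real.sqrt 2 * ‖v‖ := by
          rw [Real.sqrt_mul (by norm_num), Real.sqrt_sq (norm_nonneg v)]
  · -- Lipschitz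
    have hfun : (fun W : PiLp 2 fun _ : Fin C => EuclideanSpace ℝ (Fin m) =>
        crossEntropy C (fun z => ⟪W z, v⟫) y)
        = (lseLoss C y) ∘ (fun W => toL2 (fun z => ⟪W z, v⟫)) := by
      funext W
      rw [crossEntropy_eq' hC]
      rfl
    rw [hfun]
    exact (lipschitz_lseLoss' hC y).comp (lipschitz_scores' v)
end
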